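/- arXiv:2408.08557 — 2 statements merged into one kernel-verified Lean document; each statement's English description precedes it below -/
import Mathlib

section
/- Let φ be an LTL∨PSL formula, D = (I⁺, I⁻) a partition of the set I of subformulae of φ of the form s ≼ s', and A_{φ_D} the generalised nondeterministic Büchi automaton associated with φ_D. If the language of A_{φ_D} is non-empty, then φ_D is SLTL-satisfiable. -/
/-! ### SLTL: syntax, models, satisfaction -/

inductive SForm : Type where
  | var : ℕ → SForm
  | le : ℕ → ℕ → SForm
  | tru : SForm
  | fls : SForm
  | neg : SForm → SForm
  | conj : SForm → SForm → SForm
  | dia : ℕ → SForm → SForm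
  | box : ℕ → SForm → SForm
  | next : SForm → SForm
  | until_ : SForm → SForm → SForm

/-- Traces: ω-sequences of propositional valuations. -/
abbrev Trace := ℕ → Set ℕ

/-- An SLTL model `(Π, λ)`; standpoint symbols are natural numbers, `0` is the
universal standpoint `*`. -/
structure SLTLModel where
  Pi : Set Trace
  lam : ℕ → Set Trace
  pi_nonempty : Pi.Nonempty
  lam_sub : ∀ s, lam s ⊆ Pi
  lam_nonempty : ∀ s, (lam s).Nonempty
  lam_star : lam 0 = Pi

def SSat (M : SLTLModel) : SForm → Trace → ℕ → Prop
  | .var p, σ, i => p ∈ σ i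
  | .le s s', _, _ => M.lam s ⊆ M.lam s'
  | .tru, _, _ => True
  | .fls, _, _ => False
  | .neg a, σ, i => ¬ SSat M a σ i
  | .conj a b, σ, i => SSat M a σ i ∧ SSat M b σ i
  | .dia s a, _, i => ∃ σ' ∈ M.lam s, SSat M a σ' i
  | .box s a, _, i => ∀ σ' ∈ M.lam s, SSat M a σ' i
  | .next a, σ, i => SSat M a σ (i + 1)
  | .until_ a b, σ, i =>
      ∃ i', i ≤ i' ∧ SSat M b σ i' ∧ ∀ i'', i ≤ i'' → i'' < i' → SSat M a σ i''

def SLTLSatisfiable (φ : SForm) : Prop :=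
  ∃ M : SLTLModel, ∃ σ ∈ M.Pi, SSat M φ σ 0

def SForm.impl (a b : SForm) : SForm := .neg (.conj a (.neg b))
def SForm.iffc (a b : SForm) : SForm := .conj (a.impl b) (b.impl a)
/-- `G φ := ¬(⊤ U ¬φ)`. -/
def SForm.G (a : SForm) : SForm := .neg (.until_ .tru (.neg a))
def bigAnd (l : List SForm) : SForm := l.foldr .conj .tru
/-- The list `[a, a+1, …, b]`. -/
def listIcc (a b : ℕ) : List ℕ := (List.range (b + 1 - a)).map (fun k => a + k)

/-- Propositional variables occurring in a formula. -/
def varsSF : SForm → Finset ℕ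
  | .var p => {p}
  | .le _ _ => ∅
  | .tru => ∅
  | .fls => ∅
  | .neg a => varsSF a
  | .conj a b => varsSF a ∪ varsSF b
  | .dia _ a => varsSF a
  | .box _ a => varsSF a
  | .next a => varsSF a
  | .until_ a b => varsSF a ∪ varsSF b

/-- Standpoint symbols occurring in a formula. -/
def standsSF : SForm → Finset ℕ
  | .var _ => ∅
  | .le s s' => {s, s'}
  | .tru => ∅
  | .fls => ∅
  | .neg a => standsSF a
  | .conj a b => standsSF a ∪ standsSF b
  | .dia s a => insert s (standsSF a)
  | .box s a => insert s (standsSF a)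
  | .next a => standsSF a
  | .until_ a b => standsSF a ∪ standsSF b

/-- No temporal connective (`X` or `U`) occurs in the formula. -/
def noTemp : SForm → Prop
  | .neg a => noTemp a
  | .conj a b => noTemp a ∧ noTemp b
  | .dia _ a => noTemp a
  | .box _ a => noTemp a
  | .next _ => False
  | .until_ _ _ => False
  | _ => True

/-- The fragment LTL∨PSL: no temporal connective occurs within the scope of a
standpoint modality. -/
def isLTLPSL : SForm → Prop
  | .neg a => isLTLPSL a
  | .conj a b => isLTLPSL a ∧ isLTLPSL b
  | .dia _ a => noTemp a
  | .box _ a => noTemp a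
  | .next a => isLTLPSL a
  | .until_ a b => isLTLPSL a ∧ isLTLPSL b
  | _ => True

def sizeSF : SForm → ℕ
  | .var _ => 1
  | .le _ _ => 1
  | .tru => 1
  | .fls => 1
  | .neg a => sizeSF a + 1
  | .conj a b => sizeSF a + sizeSF b + 1
  | .dia _ a => sizeSF a + 1
  | .box _ a => sizeSF a + 1
  | .next a => sizeSF a + 1
  | .until_ a b => sizeSF a + sizeSF b + 1

/-! ### The formula `φ_D` for a partition `D = (I⁺, I⁻)` of the `≼`-subformulae -/

/-- The pairs `(s, s')` such that `s ≼ s'` is a subformula of the given formula. -/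
def leSubs : SForm → Finset (ℕ × ℕ)
  | .var _ => ∅
  | .le s s' => {(s, s')}
  | .tru => ∅
  | .fls => ∅
  | .neg a => leSubs a
  | .conj a b => leSubs a ∪ leSubs b
  | .dia _ a => leSubs a
  | .box _ a => leSubs a
  | .next a => leSubs a
  | .until_ a b => leSubs a ∪ leSubs b

/-- `φ[I⁺ ↦ ⊤, I⁻ ↦ ⊥]`: replace each subformula `s ≼ s'` with `(s,s') ∈ P`
by `⊤` and each with `(s,s') ∈ N` by `⊥`. -/
def substLe (P N : Finset (ℕ × ℕ)) : SForm → SForm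
  | .var p => .var p
  | .le s s' => if (s, s') ∈ P then .tru else if (s, s') ∈ N then .fls else .le s s'
  | .tru => .tru
  | .fls => .fls
  | .neg a => .neg (substLe P N a)
  | .conj a b => .conj (substLe P N a) (substLe P N b)
  | .dia s a => .dia s (substLe P N a)
  | .box s a => .box s (substLe P N a)
  | .next a => .next (substLe P N a)
  | .until_ a b => .until_ (substLe P N a) (substLe P N b)

/-- `ψ_D := G( ⋀_{(s≼s')∈I⁺} (s ≼ s') ∧ ⋀_{(s≼s')∈I⁻} (◇_s p_{s,s'} ∧ ¬◇_{s'} p_{s,s'}) )`,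
where `pv (s,s')` is the fresh variable `p_{s,s'}`. -/
noncomputable def psiD (P N : Finset (ℕ × ℕ)) (pv : ℕ × ℕ → ℕ) : SForm :=
  SForm.G (.conj
    (bigAnd (P.toList.map (fun pr => SForm.le pr.1 pr.2)))
    (bigAnd (N.toList.map (fun pr =>
      SForm.conj (.dia pr.1 (.var (pv pr))) (.neg (.dia pr.2 (.var (pv pr))))))))

/-- `φ_D := φ[I⁺ ↦ ⊤, I⁻ ↦ ⊥] ∧ ψ_D`. -/
noncomputable def phiD (φ : SForm) (P N : Finset (ℕ × ℕ)) (pv : ℕ × ℕ → ℕ) : SForm :=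
  .conj (substLe P N φ) (psiD P N pv)

/-! ### The closure, s-elementary sets, and the generalised Büchi automaton -/

/-- Subformulae of a formula. -/
def subfs : SForm → Set SForm
  | .var p => {SForm.var p}
  | .le s s' => {SForm.le s s'}
  | .tru => {SForm.tru}
  | .fls => {SForm.fls}
  | .neg a => insert (SForm.neg a) (subfs a)
  | .conj a b => insert (SForm.conj a b) (subfs a ∪ subfs b)
  | .dia s a => insert (SForm.dia s a) (subfs a)
  | .box s a => insert (SForm.box s a) (subfs a)
  | .next a => insert (SForm.next a) (subfs a)
  | .until_ a b => insert (SForm.until_ a b) (subfs a ∪ subfs b)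

/-- Negation, identifying `¬¬ψ` with `ψ`. -/
def negId : SForm → SForm
  | .neg a => a
  | a => .neg a

/-- The closure `cl(φ)`: the smallest set containing all subformulae of `φ`,
`⊤` and `⊥`, closed under negation (identifying `¬¬ψ` with `ψ`), and
containing `X(ψ U ψ')` whenever `ψ U ψ'` is in it. -/
inductive Cl (φ : SForm) : SForm → Prop where
  | base {ψ} : ψ ∈ subfs φ → Cl φ ψ
  | tru : Cl φ .tru
  | fls : Cl φ .fls
  | nc {ψ} : Cl φ ψ → Cl φ (negId ψ)
  | nextU {a b} : Cl φ (.until_ a b) → Cl φ (.next (.until_ a b))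

/-- A PSL model with a finite nonempty set `W` of precisifications;
`Vs` is the valuation on standpoint symbols (with `0` the universal
standpoint `*`) and `Vp` the valuation on propositional variables. -/
structure PSLM (W : Type) where
  Vs : ℕ → Set W
  Vp : ℕ → Set W
  hfin : Finite W
  hne : Nonempty W
  hs : ∀ s, (Vs s).Nonempty
  hstar : Vs 0 = Set.univ

/-- PSL satisfaction of an SLTL formula without temporal connectives
(the clauses for `X` and `U` are never used on PSL formulae). -/
def FSat {W : Type} (M : PSLM W) : SForm → W → Prop
  | .var p, π => π ∈ M.Vp p
  | .le s s', _ => M.Vs s ⊆ M.Vs s'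
  | .tru, _ => True
  | .fls, _ => False
  | .neg a, π => ¬ FSat M a π
  | .conj a b, π => FSat M a π ∧ FSat M b π
  | .dia s a, _ => ∃ π' ∈ M.Vs s, FSat M a π'
  | .box s a, _ => ∀ π' ∈ M.Vs s, FSat M a π'
  | .next _, _ => False
  | .until_ _ _, _ => False

/-- `B` is standpoint-consistent: the conjunction of all PSL formulae in `B`
is PSL-satisfiable. -/
def StandCons (B : Set SForm) : Prop :=
  ∃ (W : Type) (M : PSLM W) (π : W), ∀ ψ ∈ B, noTemp ψ → FSat M ψ π

/-- `B ⊆ cl(φ)` is maximally consistent. -/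
def MaxCons (φ : SForm) (B : Set SForm) : Prop :=
  (∀ ψ ∈ B, Cl φ ψ) ∧ SForm.tru ∈ B ∧ SForm.fls ∉ B ∧
  (∀ ψ, Cl φ (.neg ψ) → (ψ ∈ B ↔ SForm.neg ψ ∉ B)) ∧
  (∀ a b, Cl φ (.conj a b) → (SForm.conj a b ∈ B ↔ a ∈ B ∧ b ∈ B)) ∧
  (∀ a b, Cl φ (.until_ a b) →
    (SForm.until_ a b ∈ B ↔ b ∈ B ∨ (a ∈ B ∧ SForm.next (.until_ a b) ∈ B)))

/-- s-elementary: maximally consistent and standpoint-consistent. -/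
def SElem (φ : SForm) (B : Set SForm) : Prop := MaxCons φ B ∧ StandCons B

/-- `B₀B₁…` is an accepting run of the generalised nondeterministic Büchi
automaton `A_φ` on the word `A₀A₁…`:  `B₀` is initial (`φ ∈ B₀`), every `Bᵢ`
is a state (s-elementary), `Aᵢ = Bᵢ ∩ P(φ)`, consecutive states respect the
transition relation, and every accepting set is visited infinitely often. -/
def AcceptingRun (φ : SForm) (B : ℕ → Set SForm) (A : ℕ → Set ℕ) : Prop :=
  φ ∈ B 0 ∧ (∀ i, SElem φ (B i)) ∧
  (∀ i, A i = {p : ℕ | SForm.var p ∈ B i ∧ p ∈ varsSF φ}) ∧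
  (∀ i ψ, Cl φ (.next ψ) → (SForm.next ψ ∈ B i ↔ ψ ∈ B (i + 1))) ∧
  (∀ a b, Cl φ (.until_ a b) → ∀ i, ∃ j, i ≤ j ∧ (SForm.until_ a b ∉ B j ∨ b ∈ B j))

/-- The language of `A_φ` is non-empty. -/
def LangNonempty (φ : SForm) : Prop :=
  ∃ (B : ℕ → Set SForm) (A : ℕ → Set ℕ), AcceptingRun φ B A

/-! ### Auxiliary lemmas -/

lemma self_mem_subfs (ψ : SForm) : ψ ∈ subfs ψ := by
  cases ψ <;> simp [subfs]

lemma subfs_trans : ∀ (ψ χ ρ : SForm), χ ∈ subfs ψ → ρ ∈ subfs χ → ρ ∈ subfs ψ := by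
  intro ψ
  induction ψ with
  | var p => intro χ ρ h h'; simp [subfs] at h; subst h; simpa [subfs] using h'
  | le s s' => intro χ ρ h h'; simp [subfs] at h; subst h; simpa [subfs] using h'
  | tru => intro χ ρ h h'; simp [subfs] at h; subst h; simpa [subfs] using h'
  | fls => intro χ ρ h h'; simp [subfs] at h; subst h; simpa [subfs] using h'
  | neg a ih =>
    intro χ ρ h h'; simp [subfs] at h ⊢
    rcases h with h | h
    · subst h; simpa [subfs] using h'
    · exact Or.inr (ih χ ρ h h')
  | conj a b iha ihb =>
    intro χ ρ h h'; simp [subfs] at h ⊢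
    rcases h with h | h | h
    · subst h; simpa [subfs] using h'
    · exact Or.inr (Or.inl (iha χ ρ h h'))
    · exact Or.inr (Or.inr (ihb χ ρ h h'))
  | dia s a ih =>
    intro χ ρ h h'; simp [subfs] at h ⊢
    rcases h with h | h
    · subst h; simpa [subfs] using h'
    · exact Or.inr (ih χ ρ h h')
  | box s a ih =>
    intro χ ρ h h'; simp [subfs] at h ⊢
    rcases h with h | h
    · subst h; simpa [subfs] using h'
    · exact Or.inr (ih χ ρ h h')
  | next a ih =>
    intro χ ρ h h'; simp [subfs] at h ⊢
    rcases h with h | h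
    · subst h; simpa [subfs] using h'
    · exact Or.inr (ih χ ρ h h')
  | until_ a b iha ihb =>
    intro χ ρ h h'; simp [subfs] at h ⊢
    rcases h with h | h | h
    · subst h; simpa [subfs] using h'
    · exact Or.inr (Or.inl (iha χ ρ h h'))
    · exact Or.inr (Or.inr (ihb χ ρ h h'))

lemma cl_subfs {Φ ψ : SForm} (h : Cl Φ ψ) : ∀ χ ∈ subfs ψ, Cl Φ χ := by
  induction h with
  | base hb => intro χ hχ; exact Cl.base (subfs_trans _ _ _ hb hχ)
  | tru => intro χ hχ; simp [subfs] at hχ; subst hχ; exact Cl.tru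
  | fls => intro χ hχ; simp [subfs] at hχ; subst hχ; exact Cl.fls
  | @nc ψ h ih =>
    intro χ hχ
    cases ψ with
    | neg a => exact ih χ (by simpa [subfs] using Or.inr (show χ ∈ subfs a by simpa [negId] using hχ))
    | var p =>
      simp only [negId, subfs, Set.mem_insert_iff] at hχ
      rcases hχ with h' | h'
      · subst h'; exact Cl.nc h
      · exact ih _ h'
    | le s s' =>
      simp only [negId, subfs, Set.mem_insert_iff] at hχ
      rcases hχ with h' | h'
      · subst h'; exact Cl.nc h
      · exact ih _ h'
    | tru =>
      simp only [negId, subfs, Set.mem_insert_iff] at hχ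
      rcases hχ with h' | h'
      · subst h'; exact Cl.nc h
      · exact ih _ h'
    | fls =>
      simp only [negId, subfs, Set.mem_insert_iff] at hχ
      rcases hχ with h' | h'
      · subst h'; exact Cl.nc h
      · exact ih _ h'
    | conj a b =>
      simp only [negId, subfs, Set.mem_insert_iff] at hχ
      rcases hχ with h' | h'
      · subst h'; exact Cl.nc h
      · exact ih _ h'
    | dia s a =>
      simp only [negId, subfs, Set.mem_insert_iff] at hχ
      rcases hχ with h' | h'
      · subst h'; exact Cl.nc h
      · exact ih _ h'
    | box s a =>
      simp only [negId, subfs, Set.mem_insert_iff] at hχ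
      rcases hχ with h' | h'
      · subst h'; exact Cl.nc h
      · exact ih _ h'
    | next a =>
      simp only [negId, subfs, Set.mem_insert_iff] at hχ
      rcases hχ with h' | h'
      · subst h'; exact Cl.nc h
      · exact ih _ h'
    | until_ a b =>
      simp only [negId, subfs, Set.mem_insert_iff] at hχ
      rcases hχ with h' | h'
      · subst h'; exact Cl.nc h
      · exact ih _ h'
  | @nextU a b h ih =>
    intro χ hχ
    simp only [subfs, Set.mem_insert_iff] at hχ
    rcases hχ with h' | h'
    · subst h'; exact Cl.nextU h
    · exact ih _ h'

lemma noTemp_subfs : ∀ (ψ : SForm), noTemp ψ → ∀ χ ∈ subfs ψ, noTemp χ := by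
  intro ψ
  induction ψ with
  | var p => intro _ χ hχ; simp [subfs] at hχ; subst hχ; trivial
  | le s s' => intro _ χ hχ; simp [subfs] at hχ; subst hχ; trivial
  | tru => intro _ χ hχ; simp [subfs] at hχ; subst hχ; trivial
  | fls => intro _ χ hχ; simp [subfs] at hχ; subst hχ; trivial
  | neg a ih =>
    intro h χ hχ; simp [subfs] at hχ
    rcases hχ with h' | h'
    · subst h'; exact h
    · exact ih h χ h'
  | conj a b iha ihb =>
    intro h χ hχ; simp [subfs] at hχ
    rcases hχ with h' | h' | h'
    · subst h'; exact h
    · exact iha h.1 χ h'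
    · exact ihb h.2 χ h'
  | dia s a ih =>
    intro h χ hχ; simp [subfs] at hχ
    rcases hχ with h' | h'
    · subst h'; exact h
    · exact ih h χ h'
  | box s a ih =>
    intro h χ hχ; simp [subfs] at hχ
    rcases hχ with h' | h'
    · subst h'; exact h
    · exact ih h χ h'
  | next a ih => intro h; exact absurd h (by simp [noTemp])
  | until_ a b iha ihb => intro h; exact absurd h (by simp [noTemp])

lemma noTemp_isLTLPSL : ∀ (ψ : SForm), noTemp ψ → isLTLPSL ψ := by
  intro ψ
  induction ψ with
  | neg a ih => exact fun h => ih h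
  | conj a b iha ihb => exact fun h => ⟨iha h.1, ihb h.2⟩
  | dia s a ih => exact fun h => h
  | box s a ih => exact fun h => h
  | next a ih => exact fun h => absurd h (by simp [noTemp])
  | until_ a b iha ihb => exact fun h => absurd h (by simp [noTemp])
  | _ => exact fun _ => trivial

lemma isLTLPSL_subfs : ∀ (ψ : SForm), isLTLPSL ψ → ∀ χ ∈ subfs ψ, isLTLPSL χ := by
  intro ψ
  induction ψ with
  | var p => intro _ χ hχ; simp [subfs] at hχ; subst hχ; trivial
  | le s s' => intro _ χ hχ; simp [subfs] at hχ; subst hχ; trivial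
  | tru => intro _ χ hχ; simp [subfs] at hχ; subst hχ; trivial
  | fls => intro _ χ hχ; simp [subfs] at hχ; subst hχ; trivial
  | neg a ih =>
    intro h χ hχ; simp [subfs] at hχ
    rcases hχ with h' | h'
    · subst h'; exact h
    · exact ih h χ h'
  | conj a b iha ihb =>
    intro h χ hχ; simp [subfs] at hχ
    rcases hχ with h' | h' | h'
    · subst h'; exact h
    · exact iha h.1 χ h'
    · exact ihb h.2 χ h'
  | dia s a ih =>
    intro h χ hχ; simp [subfs] at hχ
    rcases hχ with h' | h'
    · subst h'; exact h
    · exact noTemp_isLTLPSL χ (noTemp_subfs a h χ h')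
  | box s a ih =>
    intro h χ hχ; simp [subfs] at hχ
    rcases hχ with h' | h'
    · subst h'; exact h
    · exact noTemp_isLTLPSL χ (noTemp_subfs a h χ h')
  | next a ih =>
    intro h χ hχ; simp [subfs] at hχ
    rcases hχ with h' | h'
    · subst h'; exact h
    · exact ih h χ h'
  | until_ a b iha ihb =>
    intro h χ hχ; simp [subfs] at hχ
    rcases hχ with h' | h' | h'
    · subst h'; exact h
    · exact iha h.1 χ h'
    · exact ihb h.2 χ h'

lemma cl_isLTLPSL {Φ ψ : SForm} (hΦ : isLTLPSL Φ) (h : Cl Φ ψ) : isLTLPSL ψ := by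
  induction h with
  | base hb => exact isLTLPSL_subfs Φ hΦ _ hb
  | tru => trivial
  | fls => trivial
  | @nc ψ h ih => cases ψ <;> simpa [negId, isLTLPSL] using ih
  | @nextU a b h ih => exact ih

lemma le_subfs_leSubs : ∀ (ψ : SForm) (s s' : ℕ), SForm.le s s' ∈ subfs ψ → (s, s') ∈ leSubs ψ := by
  intro ψ
  induction ψ with
  | var p => intro s s' h; simp [subfs] at h
  | le t t' => intro s s' h; simp [subfs] at h; simp [leSubs, h.1, h.2]
  | tru => intro s s' h; simp [subfs] at h
  | fls => intro s s' h; simp [subfs] at h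
  | neg a ih => intro s s' h; simp [subfs] at h; exact ih s s' h
  | conj a b iha ihb =>
    intro s s' h; simp [subfs] at h
    simp only [leSubs, Finset.mem_union]
    rcases h with h | h
    · exact Or.inl (iha s s' h)
    · exact Or.inr (ihb s s' h)
  | dia t a ih => intro s s' h; simp [subfs] at h; exact ih s s' h
  | box t a ih => intro s s' h; simp [subfs] at h; exact ih s s' h
  | next a ih => intro s s' h; simp [subfs] at h; exact ih s s' h
  | until_ a b iha ihb =>
    intro s s' h; simp [subfs] at h
    simp only [leSubs, Finset.mem_union]
    rcases h with h | h
    · exact Or.inl (iha s s' h)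
    · exact Or.inr (ihb s s' h)

lemma subfs_negId : ∀ (ψ χ : SForm), χ ∈ subfs (negId ψ) → χ = negId ψ ∨ χ ∈ subfs ψ := by
  intro ψ χ h
  cases ψ with
  | neg a => exact Or.inr (by simp [subfs]; right; simpa [negId] using h)
  | _ =>
    simp only [negId, subfs, Set.mem_insert_iff] at h
    tauto

lemma cl_le_subfs {Φ ψ : SForm} (h : Cl Φ ψ) :
    ∀ s s', SForm.le s s' ∈ subfs ψ → SForm.le s s' ∈ subfs Φ := by
  induction h with
  | base hb => exact fun s s' h' => subfs_trans _ _ _ hb h'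
  | tru => intro s s' h'; simp [subfs] at h'
  | fls => intro s s' h'; simp [subfs] at h'
  | @nc ψ h ih =>
    intro s s' h'
    rcases subfs_negId ψ _ h' with h' | h'
    · cases ψ with
      | neg a =>
        simp only [negId] at h'
        subst h'
        exact ih s s' (by simp [subfs, self_mem_subfs])
      | _ => simp [negId] at h'
    · exact ih s s' h' 
  | @nextU a b h ih =>
    intro s s' h'
    simp only [subfs, Set.mem_insert_iff] at h'
    rcases h' with h' | h'
    · exact absurd h' (by simp)
    · exact ih s s' h'

lemma leSubs_substLe (P N : Finset (ℕ × ℕ)) :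
    ∀ ψ : SForm, leSubs ψ ⊆ P ∪ N → leSubs (substLe P N ψ) = ∅ := by
  intro ψ
  induction ψ with
  | le s s' =>
    intro h
    have : (s, s') ∈ P ∪ N := h (by simp [leSubs])
    simp only [substLe]
    rcases Finset.mem_union.1 this with h' | h'
    · simp [h', leSubs]
    · by_cases hP : (s, s') ∈ P <;> simp [hP, h', leSubs]
  | conj a b iha ihb =>
    intro h
    simp only [leSubs, Finset.union_subset_iff] at h
    simp [substLe, leSubs, iha h.1, ihb h.2]
  | until_ a b iha ihb =>
    intro h
    simp only [leSubs, Finset.union_subset_iff] at h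
    simp [substLe, leSubs, iha h.1, ihb h.2]
  | neg a ih => intro h; simp only [leSubs] at h; simp [substLe, leSubs, ih h]
  | dia s a ih => intro h; simp only [leSubs] at h; simp [substLe, leSubs, ih h]
  | box s a ih => intro h; simp only [leSubs] at h; simp [substLe, leSubs, ih h]
  | next a ih => intro h; simp only [leSubs] at h; simp [substLe, leSubs, ih h]
  | _ => intro _; simp [substLe, leSubs]

lemma leSubs_bigAnd {S : Finset (ℕ × ℕ)} :
    ∀ l : List SForm, (∀ x ∈ l, leSubs x ⊆ S) → leSubs (bigAnd l) ⊆ S := by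
  intro l
  induction l with
  | nil => intro _; simp [bigAnd, leSubs]
  | cons x l ih =>
    intro h
    simp only [bigAnd, List.foldr_cons] at *
    show leSubs (SForm.conj x (bigAnd l)) ⊆ S
    simp only [leSubs, Finset.union_subset_iff]
    exact ⟨h x (by simp), ih (fun y hy => h y (by simp [hy]))⟩

lemma noTemp_substLe (P N : Finset (ℕ × ℕ)) :
    ∀ ψ : SForm, noTemp ψ → noTemp (substLe P N ψ) := by
  intro ψ
  induction ψ with
  | le s s' => intro _; simp only [substLe]; split_ifs <;> trivial
  | neg a ih => exact fun h => ih h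
  | conj a b iha ihb => exact fun h => ⟨iha h.1, ihb h.2⟩
  | dia s a ih => exact fun h => ih h
  | box s a ih => exact fun h => ih h
  | next a ih => exact fun h => absurd h (by simp [noTemp])
  | until_ a b iha ihb => exact fun h => absurd h (by simp [noTemp])
  | _ => exact fun _ => trivial

lemma isLTLPSL_substLe (P N : Finset (ℕ × ℕ)) :
    ∀ ψ : SForm, isLTLPSL ψ → isLTLPSL (substLe P N ψ) := by
  intro ψ
  induction ψ with
  | le s s' => intro _; simp only [substLe]; split_ifs <;> trivial
  | neg a ih => exact fun h => ih h
  | conj a b iha ihb => exact fun h => ⟨iha h.1, ihb h.2⟩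
  | dia s a ih => exact fun h => noTemp_substLe P N a h
  | box s a ih => exact fun h => noTemp_substLe P N a h
  | next a ih => exact fun h => ih h
  | until_ a b iha ihb => exact fun h => ⟨iha h.1, ihb h.2⟩
  | _ => exact fun _ => trivial

lemma noTemp_bigAnd : ∀ l : List SForm, (∀ x ∈ l, noTemp x) → noTemp (bigAnd l) := by
  intro l
  induction l with
  | nil => intro _; trivial
  | cons x l ih =>
    intro h
    show noTemp (SForm.conj x (bigAnd l))
    exact ⟨h x (by simp), ih (fun y hy => h y (by simp [hy]))⟩

lemma bigAnd_elim {Φ : SForm} {B : Set SForm} (hm : MaxCons Φ B) :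
    ∀ l : List SForm, Cl Φ (bigAnd l) → bigAnd l ∈ B → ∀ x ∈ l, x ∈ B := by
  intro l
  induction l with
  | nil => intro _ _ x hx; simp at hx
  | cons y l ih =>
    intro hcl hb x hx
    have hconj : bigAnd (y :: l) = SForm.conj y (bigAnd l) := rfl
    rw [hconj] at hcl hb
    have h2 := (hm.2.2.2.2.1 y (bigAnd l) hcl).1 hb
    rcases List.mem_cons.1 hx with h | h
    · subst h; exact h2.1
    · exact ih (cl_subfs hcl _ (by simp [subfs, self_mem_subfs])) h2.2 x h

/-! ### The model construction -/

section Construction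

variable {W : ℕ → Type}

/-- The trace associated with a choice of precisifications. -/
def tauM (M : ∀ i, PSLM (W i)) (f : ∀ j, W j) : Trace :=
  fun i => {p | f i ∈ (M i).Vp p}

/-- The choice functions compatible with standpoint `s` at every instant. -/
def GSet (M : ∀ i, PSLM (W i)) (s : ℕ) : Set (∀ j, W j) :=
  {f | ∀ j, f j ∈ (M j).Vs s}

noncomputable def cfun (M : ∀ i, PSLM (W i)) (s : ℕ) : ∀ j, W j :=
  fun j => ((M j).hs s).some

lemma cfun_mem (M : ∀ i, PSLM (W i)) (s : ℕ) : cfun M s ∈ GSet M s :=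
  fun j => ((M j).hs s).some_mem

lemma GSet_star (M : ∀ i, PSLM (W i)) : GSet M 0 = Set.univ := by
  ext f
  simp only [GSet, Set.mem_setOf_eq, Set.mem_univ, iff_true]
  intro j
  rw [(M j).hstar]
  trivial

/-- The SLTL model built from a sequence of PSL models. -/
noncomputable def ModC (M : ∀ i, PSLM (W i)) : SLTLModel where
  Pi := Set.range (tauM M)
  lam s := tauM M '' GSet M s
  pi_nonempty := ⟨tauM M (cfun M 0), Set.mem_range_self _⟩
  lam_sub s := (Set.image_subset_range _ _)
  lam_nonempty s := ⟨tauM M (cfun M s), Set.mem_image_of_mem _ (cfun_mem M s)⟩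
  lam_star := by
    show tauM M '' GSet M 0 = Set.range (tauM M)
    rw [GSet_star, Set.image_univ]

lemma lam_monoC (M : ∀ i, PSLM (W i)) {s s' : ℕ}
    (h : ∀ j, (M j).Vs s ⊆ (M j).Vs s') : (ModC M).lam s ⊆ (ModC M).lam s' :=
  Set.image_mono (fun f hf j => h j (hf j))

/-- The key semantic lemma for temporal-free formulae. -/
lemma lemB (M : ∀ i, PSLM (W i)) (P : Finset (ℕ × ℕ))
    (HP : ∀ pr ∈ P, ∀ i, (M i).Vs pr.1 ⊆ (M i).Vs pr.2) :
    ∀ χ : SForm, noTemp χ → (∀ s s', SForm.le s s' ∈ subfs χ → (s, s') ∈ P) →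
      ∀ f i, SSat (ModC M) χ (tauM M f) i ↔ FSat (M i) χ (f i) := by
  intro χ
  induction χ with
  | var p =>
    intro _ _ f i
    show p ∈ tauM M f i ↔ f i ∈ (M i).Vp p
    simp [tauM]
  | le s s' =>
    intro _ hle f i
    have hP : (s, s') ∈ P := hle s s' (self_mem_subfs _)
    have h1 : ∀ j, (M j).Vs s ⊆ (M j).Vs s' := fun j => HP _ hP j
    exact iff_of_true (lam_monoC M h1) (h1 i)
  | tru => intro _ _ f i; exact iff_of_true trivial trivial
  | fls => intro _ _ f i; exact iff_of_false (fun h => h) (fun h => h)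
  | neg a ih =>
    intro hnt hle f i
    have := ih hnt (fun s s' h => hle s s' (by simp [subfs]; exact h)) f i
    show ¬ _ ↔ ¬ _
    exact not_congr this
  | conj a b iha ihb =>
    intro hnt hle f i
    have ha := iha hnt.1 (fun s s' h => hle s s' (by simp [subfs]; exact Or.inl h)) f i
    have hb := ihb hnt.2 (fun s s' h => hle s s' (by simp [subfs]; exact Or.inr h)) f i
    show _ ∧ _ ↔ _ ∧ _
    exact and_congr ha hb
  | dia s a ih =>
    intro hnt hle f i
    have ih' := ih hnt (fun t t' h => hle t t' (by simp [subfs]; exact h))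
    show (∃ σ' ∈ tauM M '' GSet M s, SSat (ModC M) a σ' i) ↔
      ∃ π' ∈ (M i).Vs s, FSat (M i) a π'
    constructor
    · rintro ⟨σ', ⟨g, hg, rfl⟩, hsat⟩
      exact ⟨g i, hg i, (ih' g i).1 hsat⟩
    · rintro ⟨π', hπ', hF⟩
      classical
      refine ⟨tauM M (Function.update (cfun M s) i π'), ⟨Function.update (cfun M s) i π', ?_, rfl⟩, ?_⟩
      · intro j
        by_cases hj : j = i
        · subst hj; rw [Function.update_self]; exact hπ'
        · rw [Function.update_of_ne hj]; exact cfun_mem M s j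
      · refine (ih' _ i).2 ?_
        rw [Function.update_self]
        exact hF
  | box s a ih =>
    intro hnt hle f i
    have ih' := ih hnt (fun t t' h => hle t t' (by simp [subfs]; exact h))
    show (∀ σ' ∈ tauM M '' GSet M s, SSat (ModC M) a σ' i) ↔
      ∀ π' ∈ (M i).Vs s, FSat (M i) a π'
    constructor
    · intro h π' hπ'
      classical
      have hg : Function.update (cfun M s) i π' ∈ GSet M s := by
        intro j
        by_cases hj : j = i
        · subst hj; rw [Function.update_self]; exact hπ'
        · rw [Function.update_of_ne hj]; exact cfun_mem M s j
      have := h _ ⟨_, hg, rfl⟩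
      have := (ih' _ i).1 this
      rwa [Function.update_self] at this
    · rintro h σ' ⟨g, hg, rfl⟩
      exact (ih' g i).2 (h (g i) (hg i))
  | next a ih => intro hnt; exact absurd hnt (by simp [noTemp])
  | until_ a b iha ihb => intro hnt; exact absurd hnt (by simp [noTemp])

end Construction

/-- Bridge between membership in an s-elementary set and PSL satisfaction. -/
lemma bridge {Φ : SForm} {B : Set SForm} (hm : MaxCons Φ B) {W : Type} {M : PSLM W} {π : W}
    (hπ : ∀ ψ ∈ B, noTemp ψ → FSat M ψ π) :
    ∀ χ, Cl Φ χ → noTemp χ → (χ ∈ B ↔ FSat M χ π) := by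
  intro χ hcl hnt
  constructor
  · exact fun h => hπ χ h hnt
  · intro hF
    by_contra hB
    cases χ with
    | neg a =>
      have ha : a ∈ B := by
        by_contra hna
        exact hna ((hm.2.2.2.1 a hcl).2 hB)
      exact hF (hπ a ha hnt)
    | _ =>
      · have h2 := hm.2.2.2.1 _ (Cl.nc hcl)
        exact hπ _ (Classical.byContradiction fun hnn => hB (h2.2 hnn)) hnt hF

/-! ### Facts about `φ_D` -/

noncomputable def L1 (P : Finset (ℕ × ℕ)) : List SForm := P.toList.map (fun pr => SForm.le pr.1 pr.2)

noncomputable def L2 (N : Finset (ℕ × ℕ)) (pv : ℕ × ℕ → ℕ) : List SForm :=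
  N.toList.map (fun pr =>
    SForm.conj (.dia pr.1 (.var (pv pr))) (.neg (.dia pr.2 (.var (pv pr)))))

noncomputable def chi0 (P N : Finset (ℕ × ℕ)) (pv : ℕ × ℕ → ℕ) : SForm :=
  .conj (bigAnd (L1 P)) (bigAnd (L2 N pv))

noncomputable def U0 (P N : Finset (ℕ × ℕ)) (pv : ℕ × ℕ → ℕ) : SForm :=
  .until_ .tru (.neg (chi0 P N pv))

lemma psiD_eq (P N : Finset (ℕ × ℕ)) (pv : ℕ × ℕ → ℕ) :
    psiD P N pv = .neg (U0 P N pv) := rfl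

lemma phiD_eq (φ : SForm) (P N : Finset (ℕ × ℕ)) (pv : ℕ × ℕ → ℕ) :
    phiD φ P N pv = .conj (substLe P N φ) (.neg (U0 P N pv)) := rfl

lemma noTemp_chi0 (P N : Finset (ℕ × ℕ)) (pv : ℕ × ℕ → ℕ) : noTemp (chi0 P N pv) := by
  refine ⟨noTemp_bigAnd _ ?_, noTemp_bigAnd _ ?_⟩
  · intro x hx
    simp only [L1, List.mem_map] at hx
    obtain ⟨pr, _, rfl⟩ := hx
    trivial
  · intro x hx
    simp only [L2, List.mem_map] at hx
    obtain ⟨pr, _, rfl⟩ := hx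
    exact ⟨trivial, trivial⟩

lemma frag_phiD (φ : SForm) (P N : Finset (ℕ × ℕ)) (pv : ℕ × ℕ → ℕ) (hφ : isLTLPSL φ) :
    isLTLPSL (phiD φ P N pv) := by
  refine ⟨isLTLPSL_substLe P N φ hφ, ?_⟩
  show isLTLPSL (SForm.neg (U0 P N pv))
  show isLTLPSL (U0 P N pv)
  exact ⟨trivial, noTemp_isLTLPSL _ (noTemp_chi0 P N pv)⟩

lemma leSubs_phiD (φ : SForm) (P N : Finset (ℕ × ℕ)) (pv : ℕ × ℕ → ℕ)
    (hpart : P ∪ N = leSubs φ) : leSubs (phiD φ P N pv) ⊆ P := by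
  have hL1 : leSubs (bigAnd (L1 P)) ⊆ P := by
    refine leSubs_bigAnd _ ?_
    intro y hy
    simp only [L1, List.mem_map] at hy
    obtain ⟨pr, hpr, rfl⟩ := hy
    intro z hz
    simp only [leSubs, Finset.mem_singleton] at hz
    subst hz
    simpa using Finset.mem_toList.1 hpr
  have hL2 : leSubs (bigAnd (L2 N pv)) ⊆ P := by
    refine leSubs_bigAnd _ ?_
    intro y hy
    simp only [L2, List.mem_map] at hy
    obtain ⟨pr, hpr, rfl⟩ := hy
    intro z hz
    simp [leSubs] at hz
  intro x hx
  rw [phiD_eq] at hx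
  simp only [U0, chi0, leSubs, Finset.mem_union, Finset.notMem_empty, false_or] at hx
  rcases hx with hx | hx | hx
  · rw [leSubs_substLe P N φ (by rw [hpart])] at hx
    simp at hx
  · exact hL1 hx
  · exact hL2 hx

lemma mem_subfs_neg (a : SForm) : a ∈ subfs (SForm.neg a) :=
  Set.mem_insert_iff.2 (Or.inr (self_mem_subfs a))
lemma mem_subfs_conj_left (a b : SForm) : a ∈ subfs (SForm.conj a b) :=
  Set.mem_insert_iff.2 (Or.inr (Set.mem_union_left _ (self_mem_subfs a)))
lemma mem_subfs_conj_right (a b : SForm) : b ∈ subfs (SForm.conj a b) :=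
  Set.mem_insert_iff.2 (Or.inr (Set.mem_union_right _ (self_mem_subfs b)))
lemma mem_subfs_until_left (a b : SForm) : a ∈ subfs (SForm.until_ a b) :=
  Set.mem_insert_iff.2 (Or.inr (Set.mem_union_left _ (self_mem_subfs a)))
lemma mem_subfs_until_right (a b : SForm) : b ∈ subfs (SForm.until_ a b) :=
  Set.mem_insert_iff.2 (Or.inr (Set.mem_union_right _ (self_mem_subfs b)))
lemma mem_subfs_next (a : SForm) : a ∈ subfs (SForm.next a) :=
  Set.mem_insert_iff.2 (Or.inr (self_mem_subfs a))

/-- If the language of the generalised nondeterministic Büchi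
automaton `A_{φ_D}` is non-empty, then `φ_D` is SLTL-satisfiable. -/
theorem stmt5 (φ : SForm) (pv : ℕ × ℕ → ℕ) (P N : Finset (ℕ × ℕ))
    (hφ : isLTLPSL φ) (hinj : Function.Injective pv)
    (hfresh : ∀ pr, pv pr ∉ varsSF φ)
    (hpart : P ∪ N = leSubs φ) (hdisj : Disjoint P N) :
    LangNonempty (phiD φ P N pv) → SLTLSatisfiable (phiD φ P N pv) := by
  classical
  rintro ⟨B, A, h0, hel, hA, hX, hU⟩
  have hm : ∀ i, MaxCons (phiD φ P N pv) (B i) := fun i => (hel i).1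
  have hsc : ∀ i, ∃ (Wt : Type) (Mt : PSLM Wt) (πt : Wt),
      ∀ ψ ∈ B i, noTemp ψ → FSat Mt ψ πt := fun i => (hel i).2
  choose W Mps πf hπ using hsc
  -- closure facts
  have clΦ : Cl (phiD φ P N pv) (phiD φ P N pv) := Cl.base (self_mem_subfs _)
  have hmemψ : SForm.neg (U0 P N pv) ∈ subfs (phiD φ P N pv) := by
    rw [show phiD φ P N pv = SForm.conj (substLe P N φ) (.neg (U0 P N pv)) from rfl]
    exact mem_subfs_conj_right _ _
  have hclψ : Cl (phiD φ P N pv) (SForm.neg (U0 P N pv)) := Cl.base hmemψ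
  have hclU : Cl (phiD φ P N pv) (U0 P N pv) :=
    cl_subfs hclψ _ (mem_subfs_neg _)
  have hclnegχ : Cl (phiD φ P N pv) (SForm.neg (chi0 P N pv)) :=
    cl_subfs hclU _ (by
      rw [show U0 P N pv = SForm.until_ .tru (.neg (chi0 P N pv)) from rfl]
      exact mem_subfs_until_right _ _)
  have hclχ : Cl (phiD φ P N pv) (chi0 P N pv) :=
    cl_subfs hclnegχ _ (mem_subfs_neg _)
  have hclL1 : Cl (phiD φ P N pv) (bigAnd (L1 P)) :=
    cl_subfs hclχ _ (by
      rw [show chi0 P N pv = SForm.conj (bigAnd (L1 P)) (bigAnd (L2 N pv)) from rfl]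
      exact mem_subfs_conj_left _ _)
  -- the until-formula of `ψ_D` is never in `B i`, its body always is
  have hstep : ∀ i, U0 P N pv ∉ B i → chi0 P N pv ∈ B i ∧ U0 P N pv ∉ B (i + 1) := by
    intro i hni
    have hiff := (hm i).2.2.2.2.2 SForm.tru (SForm.neg (chi0 P N pv)) hclU
    have hnot : ¬(SForm.neg (chi0 P N pv) ∈ B i ∨
        (SForm.tru ∈ B i ∧ SForm.next (U0 P N pv) ∈ B i)) := fun h => hni (hiff.2 h)
    push_neg at hnot
    refine ⟨((hm i).2.2.2.1 _ hclnegχ).2 hnot.1, fun h => ?_⟩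
    exact (hnot.2 (hm i).2.1) ((hX i _ (Cl.nextU hclU)).2 h)
  have hU0 : ∀ i, U0 P N pv ∉ B i := by
    intro i
    induction i with
    | zero =>
      have hΦB := ((hm 0).2.2.2.2.1 _ _ clΦ).1 h0
      exact fun h => (((hm 0).2.2.2.1 _ hclψ).1 h) hΦB.2
    | succ i ih => exact (hstep i ih).2
  have hχall : ∀ i, chi0 P N pv ∈ B i := fun i => (hstep i (hU0 i)).1
  -- the `P`-inclusions hold at every instant
  have HPvs : ∀ pr ∈ P, ∀ i, (Mps i).Vs pr.1 ⊆ (Mps i).Vs pr.2 := by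
    intro pr hpr i
    have h1 : bigAnd (L1 P) ∈ B i := (((hm i).2.2.2.2.1 _ _ hclχ).1 (hχall i)).1
    have hle : SForm.le pr.1 pr.2 ∈ B i :=
      bigAnd_elim (hm i) _ hclL1 h1 _
        (List.mem_map.2 ⟨pr, Finset.mem_toList.2 hpr, rfl⟩)
    exact hπ i _ hle trivial
  have hΦfrag := frag_phiD φ P N pv hφ
  have hleP : ∀ s s', SForm.le s s' ∈ subfs (phiD φ P N pv) → (s, s') ∈ P :=
    fun s s' h => leSubs_phiD φ P N pv hpart (le_subfs_leSubs _ s s' h)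
  have lemBB := lemB Mps P HPvs
  -- the truth lemma
  have main : ∀ n ψ, sizeSF ψ ≤ n → Cl (phiD φ P N pv) ψ →
      ∀ i, (ψ ∈ B i ↔ SSat (ModC Mps) ψ (tauM Mps πf) i) := by
    intro n
    induction n with
    | zero =>
      intro ψ hs
      exact absurd hs (by cases ψ <;> simp [sizeSF])
    | succ n ihn =>
      intro ψ hs hcl i
      have hatom : noTemp ψ → (ψ ∈ B i ↔ SSat (ModC Mps) ψ (tauM Mps πf) i) := by
        intro hnt
        rw [bridge (hm i) (hπ i) ψ hcl hnt]
        exact (lemBB ψ hnt (fun s s' h => hleP s s' (cl_le_subfs hcl s s' h)) πf i).symm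
      cases ψ with
      | var p => exact hatom trivial
      | le s t => exact hatom trivial
      | tru => exact hatom trivial
      | fls => exact hatom trivial
      | dia s a => exact hatom (cl_isLTLPSL hΦfrag hcl)
      | box s a => exact hatom (cl_isLTLPSL hΦfrag hcl)
      | neg a =>
        have hcla : Cl (phiD φ P N pv) a := cl_subfs hcl a (mem_subfs_neg a)
        have hsa : sizeSF a ≤ n := by simp only [sizeSF] at hs; omega
        have hiff := ihn a hsa hcla i
        have hneg := (hm i).2.2.2.1 a hcl
        show SForm.neg a ∈ B i ↔ ¬ SSat (ModC Mps) a (tauM Mps πf) i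
        constructor
        · intro h hsat
          exact (hneg.1 (hiff.2 hsat)) h
        · intro h
          by_contra hn
          exact h (hiff.1 (hneg.2 hn))
      | conj a b =>
        have hcla := cl_subfs hcl a (mem_subfs_conj_left a b)
        have hclb := cl_subfs hcl b (mem_subfs_conj_right a b)
        have hsa : sizeSF a ≤ n := by simp only [sizeSF] at hs; omega
        have hsb : sizeSF b ≤ n := by simp only [sizeSF] at hs; omega
        show _ ↔ SSat (ModC Mps) a (tauM Mps πf) i ∧ SSat (ModC Mps) b (tauM Mps πf) i
        rw [(hm i).2.2.2.2.1 a b hcl, ihn a hsa hcla i, ihn b hsb hclb i]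
      | next a =>
        have hcla := cl_subfs hcl a (mem_subfs_next a)
        have hsa : sizeSF a ≤ n := by simp only [sizeSF] at hs; omega
        show _ ↔ SSat (ModC Mps) a (tauM Mps πf) (i + 1)
        rw [hX i a hcl, ihn a hsa hcla (i + 1)]
      | until_ a b =>
        have hcla := cl_subfs hcl a (mem_subfs_until_left a b)
        have hclb := cl_subfs hcl b (mem_subfs_until_right a b)
        have hsa : sizeSF a ≤ n := by simp only [sizeSF] at hs; omega
        have hsb : sizeSF b ≤ n := by simp only [sizeSF] at hs; omega
        have huiff := fun j => (hm j).2.2.2.2.2 a b hcl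
        have hxiff := fun j => hX j (SForm.until_ a b) (Cl.nextU hcl)
        have ihA := fun j => ihn a hsa hcla j
        have ihB := fun j => ihn b hsb hclb j
        have fwd : ∀ d k, SForm.until_ a b ∈ B k →
            (SForm.until_ a b ∉ B (k + d) ∨ b ∈ B (k + d)) →
            ∃ j, k ≤ j ∧ b ∈ B j ∧ ∀ m, k ≤ m → m < j → a ∈ B m := by
          intro d
          induction d with
          | zero =>
            intro k hk hend
            refine ⟨k, le_refl _, ?_, fun m h1 h2 => absurd h1 (by omega)⟩
            rcases hend with h | h
            · exact absurd hk (by simpa using h)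
            · simpa using h
          | succ d ihd =>
            intro k hk hend
            by_cases hb : b ∈ B k
            · exact ⟨k, le_refl _, hb, fun m h1 h2 => absurd h1 (by omega)⟩
            · rcases (huiff k).1 hk with h2 | h2
              · exact absurd h2 hb
              · have hk1 : SForm.until_ a b ∈ B (k + 1) := (hxiff k).1 h2.2
                have hend' : SForm.until_ a b ∉ B (k + 1 + d) ∨ b ∈ B (k + 1 + d) := by
                  rw [show k + 1 + d = k + (d + 1) by omega]; exact hend
                obtain ⟨j, hj1, hj2, hj3⟩ := ihd (k + 1) hk1 hend'
                refine ⟨j, by omega, hj2, fun m h1 h3 => ?_⟩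
                rcases eq_or_lt_of_le h1 with he | hl
                · rw [← he]; exact h2.1
                · exact hj3 m (by omega) h3
        have bwd : ∀ d k, b ∈ B (k + d) → (∀ m, k ≤ m → m < k + d → a ∈ B m) →
            SForm.until_ a b ∈ B k := by
          intro d
          induction d with
          | zero => intro k hb _; exact (huiff k).2 (Or.inl (by simpa using hb))
          | succ d ihd =>
            intro k hb ha
            have hak : a ∈ B k := ha k le_rfl (by omega)
            have hk1 : SForm.until_ a b ∈ B (k + 1) :=
              ihd (k + 1) (by rw [show k + 1 + d = k + (d + 1) by omega]; exact hb)
                (fun m h1 h2 => ha m (by omega) (by omega))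
            exact (huiff k).2 (Or.inr ⟨hak, (hxiff k).2 hk1⟩)
        show _ ↔ ∃ j, i ≤ j ∧ SSat (ModC Mps) b (tauM Mps πf) j ∧
            ∀ m, i ≤ m → m < j → SSat (ModC Mps) a (tauM Mps πf) m
        constructor
        · intro hUi
          obtain ⟨j, hij, hend⟩ := hU a b hcl i
          obtain ⟨j', h1, h2, h3⟩ := fwd (j - i) i hUi
            (by rw [show i + (j - i) = j by omega]; exact hend)
          exact ⟨j', h1, (ihB j').1 h2, fun m hm1 hm2 => (ihA m).1 (h3 m hm1 hm2)⟩
        · rintro ⟨j, hij, hb, ha⟩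
          refine bwd (j - i) i (by rw [show i + (j - i) = j by omega]; exact (ihB j).2 hb) ?_
          intro m h1 h2
          exact (ihA m).2 (ha m h1 (by omega))
  exact ⟨ModC Mps, tauM Mps πf, Set.mem_range_self _,
    (main (sizeSF (phiD φ P N pv)) _ le_rfl clΦ 0).1 h0⟩
end

section
/- Let n ≥ 1 and φ_C := G(◇_s(C_n ∧ p ∧ X G ¬p)). For every SLTL model M = (Π, λ) and every σ ∈ Π such that M, σ, 0 ⊨ φ_C, for each position i > 2ⁿ and each m ∈ {0,…,2ⁿ−1}, there exists σ' ∈ Π such that M, σ', i ⊨ C=m. -/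
/-! ### The binary-counter formula `C_n` and `φ_C` -/

/-- `¬p₁ ∧ ⋯ ∧ ¬p_n`, where `p_i := pv i`. -/
def allZero (n : ℕ) (pv : ℕ → ℕ) : SForm :=
  bigAnd ((listIcc 1 n).map (fun i => SForm.neg (SForm.var (pv i))))

/-- `p₁ ∧ ⋯ ∧ p_n`. -/
def allOne (n : ℕ) (pv : ℕ → ℕ) : SForm :=
  bigAnd ((listIcc 1 n).map (fun i => SForm.var (pv i)))

/-- The binary-counter formula `C_n` over variables `p_i := pv i`, `1 ≤ i ≤ n`,
with `p₁` the most significant bit. -/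
def Cn (n : ℕ) (pv : ℕ → ℕ) : SForm :=
  SForm.conj (allZero n pv)
    (SForm.conj (SForm.G (SForm.impl (allOne n pv) (SForm.next (allZero n pv))))
      (bigAnd ((listIcc 1 n).map (fun i =>
        SForm.G (SForm.impl
          (SForm.conj (SForm.neg (SForm.var (pv i)))
            (bigAnd ((listIcc (i + 1) n).map (fun i' => SForm.var (pv i')))))
          (SForm.conj
            (bigAnd ((listIcc (i + 1) n).map (fun i' => SForm.next (SForm.neg (SForm.var (pv i'))))))
            (SForm.conj (SForm.next (SForm.var (pv i)))
              (bigAnd ((listIcc 1 (i - 1)).map (fun i' =>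
                SForm.iffc (SForm.var (pv i')) (SForm.next (SForm.var (pv i')))))))))))))

/-- `φ_C := G(◇_s(C_n ∧ p ∧ X G ¬p))`, where `p := p0`. -/
def phiC (n : ℕ) (pv : ℕ → ℕ) (p0 s : ℕ) : SForm :=
  SForm.G (SForm.dia s (SForm.conj (Cn n pv)
    (SForm.conj (SForm.var p0) (SForm.next (SForm.G (SForm.neg (SForm.var p0)))))))

open Classical in
/-- The value of the counter at position `i` of trace `σ`: the number whose
`n`-bit binary representation `b₁…b_n` (with `b₁` most significant) is given
by `b_j = 1` iff `pv j ∈ σ i`.  `σ, i ⊨ C=m` means `cval n pv σ i = m`. -/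
noncomputable def cval (n : ℕ) (pv : ℕ → ℕ) (σ : Trace) (i : ℕ) : ℕ :=
  ∑ j ∈ Finset.Icc 1 n, if pv j ∈ σ i then 2 ^ (n - j) else 0

/-! ### Auxiliary lemmas -/

lemma mem_listIcc {a b j : ℕ} : j ∈ listIcc a b ↔ a ≤ j ∧ j ≤ b := by
  simp only [listIcc, List.mem_map, List.mem_range]
  constructor
  · rintro ⟨k, hk, rfl⟩; omega
  · rintro ⟨h1, h2⟩; exact ⟨j - a, by omega, by omega⟩

lemma SSat_bigAnd {M : SLTLModel} {l : List SForm} {σ : Trace} {i : ℕ} :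
    SSat M (bigAnd l) σ i ↔ ∀ a ∈ l, SSat M a σ i := by
  induction l with
  | nil => simp [bigAnd, SSat]
  | cons x t ih =>
      simp only [bigAnd, List.foldr] at ih ⊢
      simp [SSat, ih]

lemma SSat_G {M : SLTLModel} {a : SForm} {σ : Trace} {i : ℕ} :
    SSat M (SForm.G a) σ i ↔ ∀ k, i ≤ k → SSat M a σ k := by
  simp only [SForm.G, SSat]
  push_neg
  constructor
  · intro h k hk
    by_contra hc
    exact absurd (h k hk) (by simp [hc])
  · intro h k hk
    simp [h k hk]

lemma SSat_impl {M : SLTLModel} {a b : SForm} {σ : Trace} {i : ℕ} :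
    SSat M (a.impl b) σ i ↔ (SSat M a σ i → SSat M b σ i) := by
  simp only [SForm.impl, SSat]; tauto

lemma SSat_iffc {M : SLTLModel} {a b : SForm} {σ : Trace} {i : ℕ} :
    SSat M (a.iffc b) σ i ↔ (SSat M a σ i ↔ SSat M b σ i) := by
  simp only [SForm.iffc, SSat, SSat_impl]
  constructor
  · rintro ⟨h1, h2⟩; exact ⟨by simpa using h1, by simpa using h2⟩
  · rintro h; constructor <;> tauto

lemma sum_two_pow (m : ℕ) : ∑ k ∈ Finset.range m, 2 ^ k = 2 ^ m - 1 := by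
  induction m with
  | zero => simp
  | succ m ih =>
      rw [Finset.sum_range_succ, ih]
      have h1 : 1 ≤ 2 ^ m := Nat.one_le_two_pow
      have h2 : 2 ^ (m + 1) = 2 ^ m * 2 := pow_succ 2 m
      omega

lemma sum_Icc_two_pow {i n : ℕ} (h : i ≤ n) :
    ∑ j ∈ Finset.Icc (i + 1) n, 2 ^ (n - j) = 2 ^ (n - i) - 1 := by
  rw [← sum_two_pow (n - i)]
  refine Finset.sum_nbij' (fun j => n - j) (fun k => n - k) ?_ ?_ ?_ ?_ ?_ <;>
    intro a ha <;> simp only [Finset.mem_Icc, Finset.mem_range] at * <;> omega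

open Classical in
lemma incr (n i : ℕ) (b b' : ℕ → Prop) (h1 : 1 ≤ i) (h2 : i ≤ n)
    (hb : ¬ b i) (hhigh : ∀ j, i < j → j ≤ n → b j)
    (hb' : b' i) (hhigh' : ∀ j, i < j → j ≤ n → ¬ b' j)
    (hlow : ∀ j, 1 ≤ j → j < i → (b j ↔ b' j)) :
    (∑ j ∈ Finset.Icc 1 n, if b' j then 2 ^ (n - j) else 0)
      = (∑ j ∈ Finset.Icc 1 n, if b j then 2 ^ (n - j) else 0) + 1 := by
  have hsplit : Finset.Icc 1 n = Finset.Icc 1 (i - 1) ∪ Finset.Icc i n := by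
    ext x; simp only [Finset.mem_union, Finset.mem_Icc]; omega
  have hdisj : Disjoint (Finset.Icc 1 (i - 1)) (Finset.Icc i n) := by
    rw [Finset.disjoint_left]
    intro x hx hx'
    simp only [Finset.mem_Icc] at hx hx'; omega
  have hins : Finset.Icc i n = insert i (Finset.Icc (i + 1) n) := by
    ext x; simp only [Finset.mem_insert, Finset.mem_Icc]; omega
  have hnotmem : i ∉ Finset.Icc (i + 1) n := by simp
  rw [hsplit, Finset.sum_union hdisj, Finset.sum_union hdisj, hins,
    Finset.sum_insert hnotmem, Finset.sum_insert hnotmem]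
  have hlowsum : (∑ j ∈ Finset.Icc 1 (i - 1), if b' j then 2 ^ (n - j) else 0)
      = ∑ j ∈ Finset.Icc 1 (i - 1), if b j then 2 ^ (n - j) else 0 := by
    refine Finset.sum_congr rfl fun j hj => ?_
    simp only [Finset.mem_Icc] at hj
    have := hlow j hj.1 (by omega)
    by_cases hbj : b j
    · rw [if_pos hbj, if_pos (this.mp hbj)]
    · rw [if_neg hbj, if_neg (fun hb'j => hbj (this.mpr hb'j))]
  have hhsum : (∑ j ∈ Finset.Icc (i + 1) n, if b j then 2 ^ (n - j) else 0)
      = 2 ^ (n - i) - 1 := by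
    rw [← sum_Icc_two_pow h2]
    refine Finset.sum_congr rfl fun j hj => ?_
    simp only [Finset.mem_Icc] at hj
    rw [if_pos (hhigh j (by omega) hj.2)]
  have hhsum' : (∑ j ∈ Finset.Icc (i + 1) n, if b' j then 2 ^ (n - j) else 0) = 0 := by
    refine Finset.sum_eq_zero fun j hj => ?_
    simp only [Finset.mem_Icc] at hj
    rw [if_neg (hhigh' j (by omega) hj.2)]
  rw [hlowsum, hhsum, hhsum', if_pos hb', if_neg hb]
  have : 1 ≤ 2 ^ (n - i) := Nat.one_le_two_pow
  omega

lemma cval_allOne {n : ℕ} {pv : ℕ → ℕ} {σ : Trace} {i : ℕ}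
    (h : ∀ k, 1 ≤ k → k ≤ n → pv k ∈ σ i) : cval n pv σ i = 2 ^ n - 1 := by
  unfold cval
  rw [Finset.sum_congr rfl (fun k hk => by
    simp only [Finset.mem_Icc] at hk
    exact if_pos (h k hk.1 hk.2))]
  simpa using sum_Icc_two_pow (Nat.zero_le n)

lemma counter (n : ℕ) (pv : ℕ → ℕ) (M : SLTLModel) (σ' : Trace) (j : ℕ)
    (hC : SSat M (Cn n pv) σ' j) : ∀ t, t < 2 ^ n → cval n pv σ' (j + t) = t := by
  have hz : ∀ k, 1 ≤ k → k ≤ n → pv k ∉ σ' j := by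
    have := (show SSat M (allZero n pv) σ' j from hC.1)
    simp only [allZero, SSat_bigAnd, List.mem_map] at this
    intro k hk1 hk2
    exact this _ ⟨k, mem_listIcc.mpr ⟨hk1, hk2⟩, rfl⟩
  have hstep : ∀ i, 1 ≤ i → i ≤ n → ∀ q, j ≤ q →
      (pv i ∉ σ' q) → (∀ i', i < i' → i' ≤ n → pv i' ∈ σ' q) →
      ((∀ i', i < i' → i' ≤ n → pv i' ∉ σ' (q + 1)) ∧ pv i ∈ σ' (q + 1) ∧
        ∀ i', 1 ≤ i' → i' < i → (pv i' ∈ σ' q ↔ pv i' ∈ σ' (q + 1))) := by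
    have hPart : SSat M (bigAnd ((listIcc 1 n).map (fun i =>
        SForm.G (SForm.impl
          (SForm.conj (SForm.neg (SForm.var (pv i)))
            (bigAnd ((listIcc (i + 1) n).map (fun i' => SForm.var (pv i')))))
          (SForm.conj
            (bigAnd ((listIcc (i + 1) n).map (fun i' => SForm.next (SForm.neg (SForm.var (pv i'))))))
            (SForm.conj (SForm.next (SForm.var (pv i)))
              (bigAnd ((listIcc 1 (i - 1)).map (fun i' =>
                SForm.iffc (SForm.var (pv i')) (SForm.next (SForm.var (pv i')))))))))))) σ' j :=
      hC.2.2
    rw [SSat_bigAnd] at hPart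
    intro i hi1 hi2 q hq hzero hone
    have hGi := hPart _ (List.mem_map.mpr ⟨i, mem_listIcc.mpr ⟨hi1, hi2⟩, rfl⟩)
    have hq' := (SSat_G.mp hGi) q hq
    rw [SSat_impl] at hq'
    have hconc := hq' (by
      refine ⟨hzero, ?_⟩
      rw [SSat_bigAnd]
      intro a ha
      rw [List.mem_map] at ha
      obtain ⟨i', hi', rfl⟩ := ha
      rw [mem_listIcc] at hi'
      exact hone i' (by omega) hi'.2)
    obtain ⟨c1, c2, c3⟩ := hconc
    refine ⟨?_, c2, ?_⟩
    · intro i' hi'1 hi'2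
      have := SSat_bigAnd.mp c1 _ (List.mem_map.mpr ⟨i', mem_listIcc.mpr ⟨by omega, hi'2⟩, rfl⟩)
      exact this
    · intro i' hi'1 hi'2
      have := SSat_bigAnd.mp c3 _ (List.mem_map.mpr ⟨i', mem_listIcc.mpr ⟨hi'1, by omega⟩, rfl⟩)
      exact SSat_iffc.mp this
  intro t
  induction t with
  | zero =>
      intro _
      unfold cval
      refine Finset.sum_eq_zero fun k hk => ?_
      simp only [Finset.mem_Icc] at hk
      rw [if_neg (by simpa using hz k hk.1 hk.2)]
  | succ t ih =>
      intro ht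
      have hct : cval n pv σ' (j + t) = t := ih (by omega)
      have hne : ∃ k, (1 ≤ k ∧ k ≤ n) ∧ pv k ∉ σ' (j + t) := by
        by_contra hcon
        push_neg at hcon
        have : cval n pv σ' (j + t) = 2 ^ n - 1 :=
          cval_allOne fun k hk1 hk2 => hcon k ⟨hk1, hk2⟩
        have h1 : 1 ≤ 2 ^ n := Nat.one_le_two_pow
        omega
      classical
      obtain ⟨k0, hk0, hk0z⟩ := hne
      have hZne : ((Finset.Icc 1 n).filter (fun k => pv k ∉ σ' (j + t))).Nonempty :=
        ⟨k0, Finset.mem_filter.mpr ⟨Finset.mem_Icc.mpr hk0, hk0z⟩⟩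
      obtain ⟨hi0Icc, hi0z⟩ := Finset.mem_filter.mp (Finset.max'_mem _ hZne)
      rw [Finset.mem_Icc] at hi0Icc
      have hhigh : ∀ k, Finset.max' _ hZne < k → k ≤ n → pv k ∈ σ' (j + t) := by
        intro k hk1 hk2
        by_contra hc
        have hkZ : k ∈ (Finset.Icc 1 n).filter (fun k => pv k ∉ σ' (j + t)) :=
          Finset.mem_filter.mpr ⟨Finset.mem_Icc.mpr ⟨by omega, hk2⟩, hc⟩
        have := Finset.le_max' _ k hkZ
        omega
      obtain ⟨c1, c2, c3⟩ := hstep _ hi0Icc.1 hi0Icc.2 (j + t) (by omega) hi0z hhigh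
      have := incr n _ (fun k => pv k ∈ σ' (j + t)) (fun k => pv k ∈ σ' (j + t + 1))
        hi0Icc.1 hi0Icc.2 hi0z hhigh c2 c1 (fun k h1 h2 => c3 k h1 h2)
      have heq : cval n pv σ' (j + (t + 1)) = cval n pv σ' (j + t) + 1 := by
        unfold cval
        rw [show j + (t + 1) = j + t + 1 by omega]
        convert this using 2
      omega

/-- For every SLTL model `M = (Π, λ)` and `σ ∈ Π` with
`M, σ, 0 ⊨ φ_C`, for each position `i > 2ⁿ` and each `m ∈ {0,…,2ⁿ−1}`, there
is `σ' ∈ Π` with `M, σ', i ⊨ C=m`. -/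
theorem stmt8 (n : ℕ) (hn : 1 ≤ n) (pv : ℕ → ℕ)
    (hinj : ∀ i ∈ Finset.Icc 1 n, ∀ j ∈ Finset.Icc 1 n, pv i = pv j → i = j)
    (p0 : ℕ) (hp0 : ∀ i ∈ Finset.Icc 1 n, pv i ≠ p0) (s : ℕ)
    (M : SLTLModel) (σ : Trace) (hσ : σ ∈ M.Pi)
    (h : SSat M (phiC n pv p0 s) σ 0) :
    ∀ i, 2 ^ n < i → ∀ m, m < 2 ^ n → ∃ σ' ∈ M.Pi, cval n pv σ' i = m := by
  intro i hi m hm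
  unfold phiC at h
  have hg := SSat_G.mp h (i - m) (Nat.zero_le _)
  obtain ⟨σ', hσ', hsat⟩ := (show ∃ σ'' ∈ M.lam s, SSat M (SForm.conj (Cn n pv)
      (SForm.conj (SForm.var p0) (SForm.next (SForm.G (SForm.neg (SForm.var p0)))))) σ'' (i - m)
    from hg)
  have hC : SSat M (Cn n pv) σ' (i - m) := hsat.1
  have hc := counter n pv M σ' (i - m) hC m hm
  have heq : i - m + m = i := by omega
  exact ⟨σ', M.lam_sub s hσ', by rwa [heq] at hc⟩
end
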